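/- arXiv:1601.06433 — 5 statements merged into one kernel-verified Lean document; each statement's English description precedes it below -/
import Mathlib

section
/- The improper integral ∫₀^{π/2} (1/sin(s) − 1/s) ds converges and equals ln(4/π). -/
open Real intervalIntegral Set Filter Topology

/-- The integrand. -/
noncomputable def sinIntegrand (s : ℝ) : ℝ := 1 / Real.sin s - 1 / s

lemma sinIntegrand_contOn : ContinuousOn sinIntegrand (Icc 0 (π / 2)) := by
  intro x hx
  rcases eq_or_lt_of_le hx.1 with h0 | h0
  · -- continuity at 0 via squeeze
    subst h0
    have hF0 : sinIntegrand 0 = 0 := by simp [sinIntegrand]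
    rw [ContinuousWithinAt, hF0]
    apply squeeze_zero_norm' (a := fun s : ℝ => s)
    · filter_upwards [eventually_nhdsWithin_of_eventually_nhds
        (eventually_lt_nhds (by norm_num : (0:ℝ) < 1)),
        self_mem_nhdsWithin] with s hs1 hsIcc
      rcases eq_or_lt_of_le hsIcc.1 with h | h
      · simp [← h, sinIntegrand]
      · have hs1' : s ≤ 1 := le_of_lt hs1
        have hsin_lt : Real.sin s < s := Real.sin_lt h
        have hsin_gt : s - s ^ 3 / 4 < Real.sin s := by
          have := Real.sin_gt_sub_cube h
          have : 0 < s ^ 3 := by positivity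
          linarith
        have hs2 : s ^ 2 ≤ 1 := by nlinarith
        have hcube : s ^ 3 ≤ s := by nlinarith [mul_le_mul_of_nonneg_left hs2 h.le]
        have hsin_pos : 0 < Real.sin s := by nlinarith
        have h1 : sinIntegrand s = (s - Real.sin s) / (Real.sin s * s) := by
          rw [sinIntegrand, div_sub_div _ _ (ne_of_gt hsin_pos) (ne_of_gt h)]
          simp
        rw [h1, Real.norm_eq_abs,
          abs_of_nonneg (div_nonneg (by linarith) (by positivity))]
        rw [div_le_iff₀ (by positivity)]
        nlinarith
    · exact tendsto_nhdsWithin_of_tendsto_nhds (by exact tendsto_id)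
  · -- continuity at positive points
    have hsin : Real.sin x ≠ 0 := by
      have : 0 < Real.sin x := Real.sin_pos_of_pos_of_lt_pi h0
        (lt_of_le_of_lt hx.2 (by linarith [Real.pi_pos]))
      exact ne_of_gt this
    have hc : ContinuousAt sinIntegrand x := by
      apply ContinuousAt.sub
      · exact ContinuousAt.div continuousAt_const Real.continuous_sin.continuousAt hsin
      · exact ContinuousAt.div continuousAt_const continuousAt_id (ne_of_gt h0)
    exact hc.continuousWithinAt

/-- Antiderivative. -/
noncomputable def sinAnti (s : ℝ) : ℝ :=
  if s = 0 then Real.log (1 / 2) else Real.log (Real.tan (s / 2) / s)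

lemma tendsto_tan_div : Tendsto (fun s : ℝ => Real.tan (s / 2) / s) (𝓝[≠] (0:ℝ))
    (𝓝 (1 / 2)) := by
  have h : HasDerivAt Real.tan 1 0 := by
    simpa using Real.hasDerivAt_tan (by simp : Real.cos 0 ≠ 0)
  have h2 : Tendsto (slope Real.tan 0) (𝓝[≠] (0:ℝ)) (𝓝 1) :=
    hasDerivAt_iff_tendsto_slope.mp h
  have hmap : Tendsto (fun s : ℝ => s / 2) (𝓝[≠] (0:ℝ)) (𝓝[≠] (0:ℝ)) := by
    apply tendsto_nhdsWithin_of_tendsto_nhds_of_eventually_within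
    · have h' : Tendsto (fun s : ℝ => s / 2) (𝓝 (0:ℝ)) (𝓝 ((0:ℝ) / 2)) :=
        (tendsto_id : Tendsto id (𝓝 (0:ℝ)) (𝓝 0)).div_const 2
      simpa using h'.mono_left nhdsWithin_le_nhds
    · filter_upwards [self_mem_nhdsWithin] with s hs
      simp only [mem_compl_iff, mem_singleton_iff] at hs ⊢
      exact div_ne_zero hs two_ne_zero
  have h3 : Tendsto (fun s : ℝ => Real.tan (s / 2) / (s / 2)) (𝓝[≠] (0:ℝ)) (𝓝 1) := by
    refine (h2.comp hmap).congr' ?_ |>.congr (fun _ => rfl)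
    filter_upwards [self_mem_nhdsWithin] with s hs
    simp [Function.comp, slope_def_field, Real.tan_zero]
  have heq : (fun s : ℝ => Real.tan (s / 2) / (s / 2) / 2)
      =ᶠ[𝓝[≠] (0:ℝ)] (fun s : ℝ => Real.tan (s / 2) / s) := by
    filter_upwards [self_mem_nhdsWithin] with s hs
    simp only [mem_compl_iff, mem_singleton_iff] at hs
    field_simp
  exact Tendsto.congr' heq (h3.div_const 2)

lemma sinAnti_contOn : ContinuousOn sinAnti (Icc 0 (π / 2)) := by
  intro x hx
  rcases eq_or_lt_of_le hx.1 with h0 | h0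
  · subst h0
    rw [← continuousWithinAt_diff_self, ContinuousWithinAt]
    have hval : sinAnti 0 = Real.log (1 / 2) := if_pos rfl
    rw [hval]
    have hle : 𝓝[Icc (0:ℝ) (π/2) \ {0}] 0 ≤ 𝓝[≠] (0:ℝ) :=
      nhdsWithin_mono _ (by intro s hs; exact hs.2)
    have := (Real.continuousAt_log (by norm_num : (1:ℝ)/2 ≠ 0)).tendsto.comp
      (tendsto_tan_div.mono_left hle)
    refine this.congr' ?_
    filter_upwards [self_mem_nhdsWithin] with s hs
    have hs0 : s ≠ 0 := hs.2
    simp [Function.comp, sinAnti, hs0]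
  · have hx2 : x < π := lt_of_le_of_lt hx.2 (by linarith [Real.pi_pos])
    have htan_pos : 0 < Real.tan (x / 2) := Real.tan_pos_of_pos_of_lt_pi_div_two
      (by linarith) (by linarith)
    have hc : ContinuousAt (fun s : ℝ => Real.log (Real.tan (s / 2) / s)) x := by
      have hcos : Real.cos (x / 2) ≠ 0 := by
        have : 0 < Real.cos (x / 2) := Real.cos_pos_of_mem_Ioo
          ⟨by linarith [Real.pi_pos], by linarith⟩
        exact ne_of_gt this
      have hdiv2 : ContinuousAt (fun s : ℝ => s / 2) x :=
        ContinuousAt.div continuousAt_id continuousAt_const two_ne_zero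
      have htanc : ContinuousAt (fun s : ℝ => Real.tan (s / 2)) x :=
        (Real.continuousAt_tan.mpr hcos).comp (f := fun s : ℝ => s / 2) hdiv2
      have hdiv : ContinuousAt (fun s : ℝ => Real.tan (s / 2) / s) x :=
        htanc.div continuousAt_id (ne_of_gt h0)
      exact (Real.continuousAt_log (by positivity)).comp hdiv
    have hCA : ContinuousAt sinAnti x := by
      refine hc.congr ?_
      filter_upwards [eventually_ne_nhds (ne_of_gt h0)] with s hs
      simp [sinAnti, hs]
    exact hCA.continuousWithinAt

lemma sinAnti_deriv {x : ℝ} (hx : x ∈ Ioo 0 (π / 2)) :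
    HasDerivAt sinAnti (sinIntegrand x) x := by
  obtain ⟨h0, h2⟩ := hx
  have hx2 : x < π := by linarith [Real.pi_pos]
  have hsin_half_pos : 0 < Real.sin (x / 2) :=
    Real.sin_pos_of_pos_of_lt_pi (by linarith) (by linarith [Real.pi_pos])
  have hcos_half_pos : 0 < Real.cos (x / 2) :=
    Real.cos_pos_of_mem_Ioo ⟨by linarith [Real.pi_pos], by linarith⟩
  have htan_pos : 0 < Real.tan (x / 2) := Real.tan_pos_of_pos_of_lt_pi_div_two
    (by linarith) (by linarith)
  have hsin_pos : 0 < Real.sin x := Real.sin_pos_of_pos_of_lt_pi h0 hx2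
  have htan : HasDerivAt (fun s : ℝ => Real.tan (s / 2))
      (1 / Real.cos (x / 2) ^ 2 * (2⁻¹)) x := by
    have := (Real.hasDerivAt_tan (ne_of_gt hcos_half_pos)).comp x
      ((hasDerivAt_id x).div_const 2)
    simp only [Function.comp_def, one_div] at this ⊢
    exact this
  have hlogtan : HasDerivAt (fun s : ℝ => Real.log (Real.tan (s / 2)))
      (1 / Real.cos (x / 2) ^ 2 * (2⁻¹) / Real.tan (x / 2)) x :=
    htan.log (ne_of_gt htan_pos)
  have hG : HasDerivAt (fun s : ℝ => Real.log (Real.tan (s / 2)) - Real.log s)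
      (1 / Real.cos (x / 2) ^ 2 * (2⁻¹) / Real.tan (x / 2) - x⁻¹) x :=
    hlogtan.sub (Real.hasDerivAt_log (ne_of_gt h0))
  have hval : 1 / Real.cos (x / 2) ^ 2 * (2⁻¹) / Real.tan (x / 2) - x⁻¹
      = sinIntegrand x := by
    have hsinx : Real.sin x = 2 * Real.sin (x / 2) * Real.cos (x / 2) := by
      rw [← Real.sin_two_mul]; ring_nf
    rw [sinIntegrand, hsinx, Real.tan_eq_sin_div_cos]
    field_simp
  rw [← hval]
  refine hG.congr_of_eventuallyEq ?_
  have hmem : Ioo (0:ℝ) π ∈ 𝓝 x := Ioo_mem_nhds h0 hx2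
  filter_upwards [hmem] with s hs
  have hs0 : s ≠ 0 := ne_of_gt hs.1
  have htans : 0 < Real.tan (s / 2) := Real.tan_pos_of_pos_of_lt_pi_div_two
    (by linarith [hs.1]) (by linarith [hs.2])
  simp only [sinAnti, hs0, if_false]
  rw [Real.log_div (ne_of_gt htans) hs0]

theorem integral_one_div_sin_sub_one_div :
    IntervalIntegrable (fun s : ℝ => 1 / Real.sin s - 1 / s) MeasureTheory.volume 0 (π / 2) ∧
    ∫ s in (0 : ℝ)..(π / 2), (1 / Real.sin s - 1 / s) = Real.log (4 / π) := by
  have hpi : (0:ℝ) < π := Real.pi_pos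
  have hle : (0:ℝ) ≤ π / 2 := by linarith
  have hint : IntervalIntegrable (fun s : ℝ => 1 / Real.sin s - 1 / s)
      MeasureTheory.volume 0 (π / 2) := by
    apply ContinuousOn.intervalIntegrable
    rw [uIcc_of_le hle]
    exact sinIntegrand_contOn
  refine ⟨hint, ?_⟩
  have key := integral_eq_sub_of_hasDeriv_right_of_le hle sinAnti_contOn
    (fun x hx => (sinAnti_deriv hx).hasDerivWithinAt)
    (by exact hint)
  simp only [sinIntegrand] at key
  rw [key]
  have hne : π / 2 ≠ 0 := by positivity
  have h0v : sinAnti 0 = Real.log (1 / 2) := if_pos rfl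
  have h1v : sinAnti (π / 2) = Real.log (2 / π) := by
    rw [sinAnti, if_neg hne, show (π / 2) / 2 = π / 4 by ring, Real.tan_pi_div_four]
    congr 1
    field_simp
  rw [h0v, h1v, ← Real.log_div (by positivity) (by norm_num)]
  congr 1
  field_simp
  ring
end

section
/- For every k ∈ ℕ with k ≥ 1, the integral ∫₀^π sin²(ks)/sin(s) ds equals 2 · Σ_{j=1}^{k} 1/(2j−1). -/
open Real

lemma sin_sq_div_sin_eq_sum (k : ℕ) (s : ℝ) :
    Real.sin (k * s) ^ 2 / Real.sin s
      = ∑ j ∈ Finset.Icc 1 k, Real.sin ((2 * (j : ℝ) - 1) * s) := by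
  induction k with
  | zero => simp
  | succ k ih =>
    rw [Finset.sum_Icc_succ_top (by omega : 1 ≤ k + 1), ← ih]
    by_cases hs : Real.sin s = 0
    · obtain ⟨n, hn⟩ := Real.sin_eq_zero_iff.mp hs
      have h1 : Real.sin ((↑(k + 1) : ℝ) * s) = 0 := by
        rw [← hn]; push_cast
        rw [show ((k:ℝ)+1) * ((n:ℝ) * π) = ((((k:ℕ)+1 : ℕ) : ℤ) * n : ℤ) * π by push_cast; ring,
          Real.sin_int_mul_pi]
      have h2 : Real.sin ((2 * (↑(k + 1) : ℝ) - 1) * s) = 0 := by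
        rw [← hn]; push_cast
        rw [show (2 * ((k:ℝ)+1) - 1) * ((n:ℝ) * π) = (((2*k+1 : ℕ) : ℤ) * n : ℤ) * π by push_cast; ring,
          Real.sin_int_mul_pi]
      push_cast at h1 h2 ⊢
      rw [h1, hs, h2]
      simp
    · have key : Real.sin ((↑(k + 1) : ℝ) * s) ^ 2
          = Real.sin ((k : ℝ) * s) ^ 2
            + Real.sin ((2 * (↑(k + 1) : ℝ) - 1) * s) * Real.sin s := by
        push_cast
        rw [show ((k:ℝ)+1) * s = (k:ℝ)*s + s by ring,
          show (2 * ((k:ℝ)+1) - 1) * s = ((k:ℝ)*s + ((k:ℝ)*s + s)) by ring]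
        simp only [Real.sin_add, Real.cos_add]
        have h1 := Real.sin_sq_add_cos_sq ((k:ℝ) * s)
        have h2 := Real.sin_sq_add_cos_sq s
        nlinarith [h1, h2]
      push_cast at key ⊢
      field_simp
      rw [show s * (((k:ℝ) + 1) * 2 - 1) = (2 * ((k:ℝ) + 1) - 1) * s by ring]
      linarith [key]

lemma integral_sin_odd (j : ℕ) (hj : 1 ≤ j) :
    ∫ s in (0 : ℝ)..π, Real.sin ((2 * (j : ℝ) - 1) * s) = 2 / (2 * (j : ℝ) - 1) := by
  have hc : (2 * (j : ℝ) - 1) ≠ 0 := by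
    have : (1 : ℝ) ≤ (j : ℝ) := by exact_mod_cast hj
    nlinarith
  rw [intervalIntegral.integral_comp_mul_left Real.sin hc, integral_sin]
  have : Real.cos ((2 * (j : ℝ) - 1) * π) = -1 := by
    rw [show (2 * (j : ℝ) - 1) * π = (j : ℤ) * (2 * π) - π by push_cast; ring,
      Real.cos_int_mul_two_pi_sub π j]
    exact Real.cos_pi
  rw [this, mul_zero, Real.cos_zero, smul_eq_mul]
  field_simp
  norm_num

theorem integral_sin_sq_div_sin (k : ℕ) (hk : 1 ≤ k) :
    ∫ s in (0 : ℝ)..π, Real.sin (k * s) ^ 2 / Real.sin s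
      = 2 * ∑ j ∈ Finset.Icc 1 k, (1 : ℝ) / (2 * (j : ℝ) - 1) := by
  simp only [sin_sq_div_sin_eq_sum]
  have hint : ∀ j ∈ Finset.Icc 1 k,
      IntervalIntegrable (fun s => Real.sin ((2 * (j : ℝ) - 1) * s))
        MeasureTheory.volume 0 π :=
    fun j _ => (by fun_prop :
      Continuous fun s => Real.sin ((2 * (j : ℝ) - 1) * s)).intervalIntegrable _ _
  rw [intervalIntegral.integral_finset_sum hint]
  rw [Finset.mul_sum]
  refine Finset.sum_congr rfl fun j hj => ?_
  rw [integral_sin_odd j (Finset.mem_Icc.mp hj).1]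
  ring
end

section
/- For every k ∈ ℕ with k ≥ 1, the strict inequality Σ_{j=1}^{k} 1/(2j−1) > (ln k + ln 4 + γ)/2 holds, where γ is the Euler–Mascheroni constant. -/
open Real Filter

lemma key_log (x : ℝ) (hx : 0 < x) : 2 * x / (2 + x) < Real.log (1 + x) := by
  set f : ℝ → ℝ := fun x => Real.log (1 + x) + 4 / (2 + x) with hf
  have hmono : StrictMonoOn f (Set.Ici (0:ℝ)) := by
    apply strictMonoOn_of_deriv_pos (convex_Ici 0)
    · apply ContinuousOn.add
      · apply ContinuousOn.log (by fun_prop)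
        intro y hy; simp at hy; linarith
      · apply ContinuousOn.div continuousOn_const (by fun_prop)
        intro y hy; simp at hy; linarith
    · intro y hy
      rw [interior_Ici] at hy
      simp only [Set.mem_Ioi] at hy
      have h1 : (0:ℝ) < 1 + y := by linarith
      have h2 : (0:ℝ) < 2 + y := by linarith
      have hd : HasDerivAt f (1 / (1 + y) - 4 / (2 + y) ^ 2) y := by
        have d1 : HasDerivAt (fun x : ℝ => Real.log (1 + x)) (1 / (1 + y)) y := by
          have := (Real.hasDerivAt_log h1.ne').comp y ((hasDerivAt_id y).const_add 1)
          simpa [Function.comp_def] using this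
        have d2 : HasDerivAt (fun x : ℝ => 4 / (2 + x)) (4 * (-(1 / (2 + y) ^ 2))) y := by
          have hi := (((hasDerivAt_id y).const_add 2).inv h2.ne').const_mul (4:ℝ)
          simp only [id] at hi
          exact hi.congr_deriv (by ring)
        have := d1.add d2
        exact this.congr_deriv (by ring)
      rw [hd.deriv]
      rw [sub_pos, div_lt_div_iff₀ (by positivity) h1]
      nlinarith
  have h0 : f 0 < f x := hmono (by simp) (le_of_lt hx) hx
  have : f 0 = 2 := by simp [hf]; norm_num
  rw [this] at h0
  rw [div_lt_iff₀ (by linarith)]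
  have h2 : (0:ℝ) < 2 + x := by linarith
  have : Real.log (1+x) = f x - 4/(2+x) := by simp [hf]
  rw [this]
  rw [sub_mul, div_mul_cancel₀ _ h2.ne'] at *
  nlinarith [h0]

lemma sum_odd_eq (k : ℕ) :
    (∑ j ∈ Finset.Icc 1 k, (1 : ℝ) / (2 * (j : ℝ) - 1))
      = (harmonic (2 * k) : ℝ) - (harmonic k : ℝ) / 2 := by
  induction k with
  | zero => simp
  | succ n ih =>
    rw [Finset.sum_Icc_succ_top (by omega), ih]
    have h1 : 2 * (n + 1) = 2 * n + 1 + 1 := by ring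
    rw [h1, harmonic_succ, harmonic_succ, harmonic_succ]
    push_cast
    have hn1 : ((n:ℝ) + 1) ≠ 0 := by positivity
    have h2 : (2*(n:ℝ) + 1) ≠ 0 := by positivity
    have h3 : (2*(n:ℝ) + 2) ≠ 0 := by positivity
    rw [show 2*((n:ℝ)+1)-1 = 2*(n:ℝ)+1 by ring,
        show (2*(n:ℝ)+1+1) = 2*((n:ℝ)+1) by ring, mul_inv]
    ring

noncomputable def bseq (k : ℕ) : ℝ :=
  2 * ((harmonic (2 * k) : ℝ) - Real.log (2 * (k:ℝ))) - ((harmonic k : ℝ) - Real.log k)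

lemma bseq_tendsto : Tendsto bseq atTop (nhds Real.eulerMascheroniConstant) := by
  have h := Real.tendsto_harmonic_sub_log
  have hd : Tendsto (fun k : ℕ => 2 * k) atTop atTop :=
    tendsto_atTop_mono (fun n => by simp only [id]; omega) tendsto_id
  have h2 : Tendsto (fun k : ℕ => (harmonic (2*k) : ℝ) - Real.log (2 * (k:ℝ))) atTop
      (nhds Real.eulerMascheroniConstant) := by
    refine (h.comp hd).congr (fun k => ?_)
    simp only [Function.comp]
    push_cast
    ring_nf
  have h3 := (h2.const_mul 2).sub h
  have : (2:ℝ) * Real.eulerMascheroniConstant - Real.eulerMascheroniConstant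
      = Real.eulerMascheroniConstant := by ring
  rw [this] at h3
  exact h3

lemma bseq_step (k : ℕ) (hk : 1 ≤ k) : bseq (k + 1) < bseq k := by
  have hk0 : (0:ℝ) < (k:ℝ) := by exact_mod_cast hk
  have key := key_log (1 / (k:ℝ)) (by positivity)
  have hlog : Real.log (1 + 1/(k:ℝ)) = Real.log ((k:ℝ)+1) - Real.log k := by
    rw [show (1 + 1/(k:ℝ)) = ((k:ℝ)+1)/k by field_simp, Real.log_div (by positivity) hk0.ne']
  rw [hlog] at key
  have hkey : 2 / (2*(k:ℝ)+1) < Real.log ((k:ℝ)+1) - Real.log k := by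
    have : 2 * (1/(k:ℝ)) / (2 + 1/(k:ℝ)) = 2 / (2*(k:ℝ)+1) := by
      rw [div_eq_div_iff (by positivity) (by positivity)]; field_simp
    linarith [this ▸ key]
  have e1 : 2 * (k+1) = 2*k + 1 + 1 := by ring
  have hh : (harmonic (2*(k+1)) : ℝ)
      = (harmonic (2*k) : ℝ) + 1/(2*(k:ℝ)+1) + 1/(2*(k:ℝ)+2) := by
    rw [e1, harmonic_succ, harmonic_succ]; push_cast; ring
  have hh2 : (harmonic (k+1) : ℝ) = (harmonic k : ℝ) + 1/((k:ℝ)+1) := by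
    rw [harmonic_succ]; push_cast; ring
  have hc : ((k+1:ℕ):ℝ) = (k:ℝ)+1 := by push_cast; ring
  have hl1 : Real.log (2*(((k+1:ℕ)):ℝ)) = Real.log 2 + Real.log ((k:ℝ)+1) := by
    rw [hc, Real.log_mul (by norm_num) (by positivity)]
  have hl2 : Real.log (2*(k:ℝ)) = Real.log 2 + Real.log (k:ℝ) :=
    Real.log_mul (by norm_num) hk0.ne'
  have e3 : 1/(2*(k:ℝ)+2) = (1/2) * (1/((k:ℝ)+1)) := by
    rw [div_mul_div_comm, one_mul]
    congr 1
    ring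
  have hkey' : 2 * (1 / (2*(k:ℝ)+1)) < Real.log ((k:ℝ)+1) - Real.log k := by
    rw [mul_one_div]; exact hkey
  unfold bseq
  rw [hh, hh2, hl2, hl1, e3, hc]
  linarith [hkey']

lemma bseq_gt (k : ℕ) (hk : 1 ≤ k) : Real.eulerMascheroniConstant < bseq k := by
  have hanti : ∀ n m : ℕ, 1 ≤ n → n ≤ m → bseq m ≤ bseq n := by
    intro n m hn hnm
    induction m with
    | zero => omega
    | succ p ih =>
      rcases Nat.lt_or_ge n (p+1) with h | h
      · exact le_trans (le_of_lt (bseq_step p (by omega))) (ih (by omega))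
      · have : n = p + 1 := by omega
        simp [this]
  have hge : Real.eulerMascheroniConstant ≤ bseq (k+1) := by
    apply le_of_tendsto bseq_tendsto
    filter_upwards [eventually_ge_atTop (k+1)] with m hm
    exact hanti (k+1) m (by omega) hm
  linarith [bseq_step k hk]

theorem odd_harmonic_lower_bound (k : ℕ) (hk : 1 ≤ k) :
    (∑ j ∈ Finset.Icc 1 k, (1 : ℝ) / (2 * (j : ℝ) - 1))
      > (Real.log (k : ℝ) + Real.log 4 + Real.eulerMascheroniConstant) / 2 := by
  have hk0 : (0:ℝ) < (k:ℝ) := by exact_mod_cast hk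
  have hb := bseq_gt k hk
  rw [sum_odd_eq]
  have hl : Real.log (2*(k:ℝ)) = Real.log 2 + Real.log (k:ℝ) :=
    Real.log_mul (by norm_num) hk0.ne'
  have h4 : Real.log 4 = 2 * Real.log 2 := by
    rw [show (4:ℝ) = 2^2 by norm_num, Real.log_pow]; push_cast; ring
  unfold bseq at hb
  rw [hl] at hb
  linarith
end

section
/- For each λ ≤ 0 and R > 0, the limit k_λ := lim_{δ→0⁺} [ ∫_{δ/(2R)}^{π/2} e^{−√(−λ)·2R sin(s)}/(2π sin(s)) ds + (ln δ)/(2π) ] exists in ℝ and equals ∫₀^{π/2} (e^{−√(−λ)·2R sin(s)} − 1)/(2π sin s) ds + ln(4R)/(2π). -/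
open Real Filter MeasureTheory Set intervalIntegral

private lemma deriv_log_tan_half {s : ℝ} (h1 : 0 < s) (h2 : s < π) :
    HasDerivAt (fun x => Real.log (Real.tan (x / 2))) ((Real.sin s)⁻¹) s := by
  have hs2 : 0 < s / 2 := by linarith
  have hs2' : s / 2 < π / 2 := by linarith
  have hcos : 0 < Real.cos (s / 2) := Real.cos_pos_of_mem_Ioo ⟨by linarith, hs2'⟩
  have hsin : 0 < Real.sin (s / 2) := Real.sin_pos_of_pos_of_lt_pi hs2 (by linarith)
  have htan : 0 < Real.tan (s / 2) := Real.tan_pos_of_pos_of_lt_pi_div_two hs2 hs2'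
  have h1' : HasDerivAt (fun x : ℝ => x / 2) (1 / 2) s := by
    simpa using (hasDerivAt_id s).div_const 2
  have h2' : HasDerivAt Real.tan (1 / Real.cos (s / 2) ^ 2) (s / 2) :=
    Real.hasDerivAt_tan hcos.ne'
  have h3 : HasDerivAt (fun x => Real.tan (x / 2)) (1 / Real.cos (s / 2) ^ 2 * (1 / 2)) s :=
    HasDerivAt.comp (h := fun x : ℝ => x / 2) s h2' h1'
  have h4 := HasDerivAt.comp (h := fun x => Real.tan (x / 2)) s (Real.hasDerivAt_log htan.ne') h3
  have hval : (Real.tan (s / 2))⁻¹ * (1 / Real.cos (s / 2) ^ 2 * (1 / 2)) = (Real.sin s)⁻¹ := by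
    have hsin_s : Real.sin s = 2 * Real.sin (s / 2) * Real.cos (s / 2) := by
      have := Real.sin_two_mul (s / 2)
      rw [show 2 * (s / 2) = s by ring] at this
      linarith
    rw [Real.tan_eq_sin_div_cos, hsin_s]
    field_simp
  rw [hval] at h4
  exact h4

theorem klambda_limit_exists (lam R : ℝ) (hlam : lam ≤ 0) (hR : 0 < R) :
    Filter.Tendsto
      (fun δ : ℝ =>
        (∫ s in (δ / (2 * R))..(π / 2),
            Real.exp (-(Real.sqrt (-lam)) * (2 * R * Real.sin s)) / (2 * π * Real.sin s))
          + Real.log δ / (2 * π))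
      (nhdsWithin 0 (Set.Ioi 0))
      (nhds ((∫ s in (0 : ℝ)..(π / 2),
          (Real.exp (-(Real.sqrt (-lam)) * (2 * R * Real.sin s)) - 1) / (2 * π * Real.sin s))
        + Real.log (4 * R) / (2 * π))) := by
  have hπ : (0 : ℝ) < π := Real.pi_pos
  set c := Real.sqrt (-lam) with hcdef
  have hc0 : 0 ≤ c := Real.sqrt_nonneg _
  set g : ℝ → ℝ := fun s => (Real.exp (-c * (2 * R * Real.sin s)) - 1) / (2 * π * Real.sin s)
    with hgdef
  -- integrability of g on [0, π/2]
  have hgmeas : Measurable g := by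
    apply Measurable.div
    · exact (Real.measurable_exp.comp (by fun_prop)).sub measurable_const
    · fun_prop
  have hgint : IntegrableOn g (Set.Icc 0 (π / 2)) := by
    apply MeasureTheory.Integrable.mono'
      (g := fun _ => c * (2 * R) / (2 * π))
      (integrableOn_const measure_Icc_lt_top.ne)
      hgmeas.aestronglyMeasurable
    filter_upwards [MeasureTheory.ae_restrict_mem measurableSet_Icc] with s hs
    have hsin0 : 0 ≤ Real.sin s := Real.sin_nonneg_of_nonneg_of_le_pi hs.1 (by linarith [hs.2])
    have hnum : |Real.exp (-c * (2 * R * Real.sin s)) - 1| ≤ c * (2 * R * Real.sin s) := by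
      have ha : 0 ≤ c * (2 * R * Real.sin s) := by positivity
      rw [abs_le]
      constructor
      · have := Real.add_one_le_exp (-(c * (2 * R * Real.sin s)))
        have h' : -c * (2 * R * Real.sin s) = -(c * (2 * R * Real.sin s)) := by ring
        rw [h']; linarith
      · have : Real.exp (-c * (2 * R * Real.sin s)) ≤ 1 := by
          rw [show -c * (2 * R * Real.sin s) = -(c * (2 * R * Real.sin s)) by ring]
          exact Real.exp_le_one_iff.mpr (by linarith)
        linarith
    rcases eq_or_lt_of_le hsin0 with h0 | hpos
    · simp only [Real.norm_eq_abs, hgdef]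
      rw [← h0]
      simp
      positivity
    · simp only [Real.norm_eq_abs, hgdef, abs_div]
      rw [abs_of_pos (by positivity : (0:ℝ) < 2 * π * Real.sin s)]
      calc |Real.exp (-c * (2 * R * Real.sin s)) - 1| / (2 * π * Real.sin s)
          ≤ c * (2 * R * Real.sin s) / (2 * π * Real.sin s) := by
            apply div_le_div_of_nonneg_right hnum (by positivity) |>.trans_eq rfl
        _ = c * (2 * R) / (2 * π) := by
            field_simp
  have hgint' : IntegrableOn g (Set.uIcc 0 (π / 2)) := by
    rwa [Set.uIcc_of_le (by positivity)]
  -- K is the primitive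
  set K : ℝ → ℝ := fun x => ∫ s in x..(π / 2), g s with hKdef
  have hKcont : ContinuousOn K (Set.uIcc 0 (π / 2)) :=
    intervalIntegral.continuousOn_primitive_interval_left hgint'
  have hKcw : ContinuousWithinAt K (Set.uIcc 0 (π / 2)) 0 :=
    hKcont 0 (Set.left_mem_uIcc)
  -- limit of K (δ / (2R))
  have htend1 : Tendsto (fun δ => K (δ / (2 * R))) (nhdsWithin 0 (Set.Ioi 0)) (nhds (K 0)) := by
    apply hKcw.tendsto.comp
    rw [tendsto_nhdsWithin_iff]
    constructor
    · have : Tendsto (fun δ : ℝ => δ / (2 * R)) (nhds 0) (nhds 0) := by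
        have := (continuous_id.div_const (2 * R)).tendsto (0 : ℝ)
        simpa using this
      exact this.mono_left nhdsWithin_le_nhds
    · filter_upwards [Ioo_mem_nhdsGT_of_mem (Set.mem_Ico.2 ⟨le_refl 0, by positivity⟩ :
        (0:ℝ) ∈ Set.Ico 0 (R * π))] with δ hδ
      obtain ⟨hδ1, hδ2⟩ := hδ
      rw [Set.uIcc_of_le (by positivity)]
      constructor
      · positivity
      · rw [div_le_iff₀ (by positivity)]
        nlinarith
  -- limit of tan u / u
  have htanu : Tendsto (fun δ : ℝ => Real.tan (δ / (4 * R)) / (δ / (4 * R)))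
      (nhdsWithin 0 (Set.Ioi 0)) (nhds 1) := by
    have hder : HasDerivAt Real.tan 1 0 := by
      simpa using Real.hasDerivAt_tan (x := 0) (by simp)
    rw [hasDerivAt_iff_tendsto_slope] at hder
    have hcomp : Tendsto (fun δ : ℝ => δ / (4 * R)) (nhdsWithin 0 (Set.Ioi 0))
        (nhdsWithin 0 {(0:ℝ)}ᶜ) := by
      rw [tendsto_nhdsWithin_iff]
      constructor
      · have : Tendsto (fun δ : ℝ => δ / (4 * R)) (nhds 0) (nhds 0) := by
          simpa using (continuous_id.div_const (4 * R)).tendsto (0 : ℝ)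
        exact this.mono_left nhdsWithin_le_nhds
      · filter_upwards [self_mem_nhdsWithin] with δ (hδ : 0 < δ)
        simp only [Set.mem_compl_iff, Set.mem_singleton_iff]
        positivity
    have := hder.comp hcomp
    apply this.congr
    intro δ
    simp [slope_def_field, Real.tan_zero, Function.comp]
  -- limit of the log part
  have hlogpart : Tendsto (fun δ : ℝ =>
      (Real.log (4 * R) - Real.log (Real.tan (δ / (4 * R)) / (δ / (4 * R)))) / (2 * π))
      (nhdsWithin 0 (Set.Ioi 0)) (nhds (Real.log (4 * R) / (2 * π))) := by
    have hlog : Tendsto (fun δ : ℝ => Real.log (Real.tan (δ / (4 * R)) / (δ / (4 * R))))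
        (nhdsWithin 0 (Set.Ioi 0)) (nhds 0) := by
      have := (Real.continuousAt_log one_ne_zero).tendsto.comp htanu
      simpa [Function.comp_def] using this
    have := ((tendsto_const_nhds (x := Real.log (4 * R))).sub hlog).div_const (2 * π)
    simpa using this
  -- combined limit of the auxiliary function
  have hK0 : K 0 = ∫ s in (0:ℝ)..(π / 2), g s := rfl
  have htendH : Tendsto (fun δ : ℝ => K (δ / (2 * R)) +
      (Real.log (4 * R) - Real.log (Real.tan (δ / (4 * R)) / (δ / (4 * R)))) / (2 * π))
      (nhdsWithin 0 (Set.Ioi 0))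
      (nhds ((∫ s in (0:ℝ)..(π / 2), g s) + Real.log (4 * R) / (2 * π))) := by
    rw [← hK0]
    exact htend1.add hlogpart
  -- eventual equality
  apply htendH.congr'
  filter_upwards [Ioo_mem_nhdsGT_of_mem (Set.mem_Ico.2 ⟨le_refl 0, by positivity⟩ :
      (0:ℝ) ∈ Set.Ico 0 (R * π))] with δ hδ
  obtain ⟨hδ0, hδR⟩ := hδ
  set ε := δ / (2 * R) with hεdef
  have hε0 : 0 < ε := by positivity
  have hεlt : ε < π / 2 := by
    rw [hεdef, div_lt_iff₀ (by positivity)]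
    nlinarith
  have hεle : ε ≤ π / 2 := le_of_lt hεlt
  have huIcc : Set.uIcc ε (π / 2) = Set.Icc ε (π / 2) := Set.uIcc_of_le hεle
  have hsinpos : ∀ s ∈ Set.uIcc ε (π / 2), 0 < Real.sin s := by
    intro s hs
    rw [huIcc] at hs
    exact Real.sin_pos_of_pos_of_lt_pi (lt_of_lt_of_le hε0 hs.1) (by linarith [hs.2])
  -- split the integrand
  have hint_g : IntervalIntegrable g volume ε (π / 2) := by
    apply ContinuousOn.intervalIntegrable
    rw [hgdef]
    exact ContinuousOn.div (by fun_prop) (by fun_prop)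
      (fun s hs => by have := hsinpos s hs; positivity)
  have hint_i : IntervalIntegrable (fun s => (2 * π)⁻¹ * (Real.sin s)⁻¹) volume ε (π / 2) := by
    apply ContinuousOn.intervalIntegrable
    exact continuousOn_const.mul
      (Real.continuous_sin.continuousOn.inv₀ fun s hs => (hsinpos s hs).ne')
  have hsplit : (∫ s in ε..(π / 2),
      Real.exp (-c * (2 * R * Real.sin s)) / (2 * π * Real.sin s)) =
      (∫ s in ε..(π / 2), g s) + (∫ s in ε..(π / 2), (2 * π)⁻¹ * (Real.sin s)⁻¹) := by
    rw [← intervalIntegral.integral_add hint_g hint_i]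
    apply intervalIntegral.integral_congr
    intro s hs
    have hsp := hsinpos s hs
    simp only [hgdef]
    field_simp
    ring
  have hantideriv : (∫ s in ε..(π / 2), (Real.sin s)⁻¹) = -Real.log (Real.tan (ε / 2)) := by
    have heval : (∫ s in ε..(π / 2), (Real.sin s)⁻¹) =
        Real.log (Real.tan ((π / 2) / 2)) - Real.log (Real.tan (ε / 2)) := by
      refine intervalIntegral.integral_eq_sub_of_hasDerivAt
        (f := fun x => Real.log (Real.tan (x / 2))) ?_ ?_
      · intro x hx
        rw [huIcc] at hx
        exact deriv_log_tan_half (lt_of_lt_of_le hε0 hx.1) (by linarith [hx.2])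
      · apply ContinuousOn.intervalIntegrable
        apply ContinuousOn.inv₀ (Real.continuous_sin.continuousOn)
        intro s hs
        exact (hsinpos s hs).ne'
    rw [heval, show (π / 2) / 2 = π / 4 by ring, Real.tan_pi_div_four, Real.log_one]
    ring
  have hu : ε / 2 = δ / (4 * R) := by rw [hεdef]; ring
  have hu0 : 0 < δ / (4 * R) := by positivity
  have hult : δ / (4 * R) < π / 2 := by
    rw [div_lt_iff₀ (by positivity)]
    nlinarith
  have htanpos : 0 < Real.tan (δ / (4 * R)) :=
    Real.tan_pos_of_pos_of_lt_pi_div_two hu0 hult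
  -- final arithmetic
  rw [hsplit, intervalIntegral.integral_const_mul, hantideriv, hu]
  have hlogu : Real.log (δ / (4 * R)) = Real.log δ - Real.log (4 * R) :=
    Real.log_div hδ0.ne' (by positivity)
  have hlogq : Real.log (Real.tan (δ / (4 * R)) / (δ / (4 * R))) =
      Real.log (Real.tan (δ / (4 * R))) - Real.log (δ / (4 * R)) :=
    Real.log_div htanpos.ne' hu0.ne'
  rw [hlogq, hlogu]
  field_simp
  ring
end

section
/- Let G : (0,∞) → ℝ be strictly decreasing and convex, let σ : ℝ → ℝ³ be measurable and L-periodic, and suppose ∫₀^L |σ(s+u) − σ(s)| ds < (L²/π) sin(πu/L) for some u ∈ (0, L), with |σ(s+u) − σ(s)| > 0 for a.e. s. Then (1/L)∫₀^L G(|σ(s+u) − σ(s)|) ds > G((L/π) sin(πu/L)). -/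
open Real MeasureTheory

/-- Supporting line for a convex function on `Ioi 0` at an interior point. -/
lemma convexOn_exists_support_line {G : ℝ → ℝ} (hG : ConvexOn ℝ (Set.Ioi 0) G)
    {m : ℝ} (hm : 0 < m) :
    ∃ a : ℝ, ∀ x ∈ Set.Ioi (0 : ℝ), G m + a * (x - m) ≤ G x := by
  set S : Set ℝ := (fun x => (G m - G x) / (m - x)) '' Set.Ioo 0 m with hS
  have hne : S.Nonempty := ⟨(G m - G (m / 2)) / (m - m / 2),
    ⟨m / 2, ⟨by linarith, by linarith⟩, rfl⟩⟩
  have hub : ∀ z ∈ Set.Ioi m, ∀ y ∈ S, y ≤ (G z - G m) / (z - m) := by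
    rintro z hz y ⟨x, hx, rfl⟩
    exact hG.slope_mono_adjacent hx.1 (lt_trans hm hz) hx.2 hz
  have hbdd : BddAbove S := ⟨(G (m + 1) - G m) / (m + 1 - m),
    fun y hy => hub (m + 1) (by simp only [Set.mem_Ioi]; linarith) y hy⟩
  refine ⟨sSup S, fun x hx => ?_⟩
  rcases lt_trichotomy x m with h | h | h
  · have hmem : (G m - G x) / (m - x) ∈ S := ⟨x, ⟨hx, h⟩, rfl⟩
    have hle : (G m - G x) / (m - x) ≤ sSup S := le_csSup hbdd hmem
    have hxm : 0 < m - x := by linarith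
    rw [div_le_iff₀ hxm] at hle
    nlinarith
  · simp [h]
  · have hge : sSup S ≤ (G x - G m) / (x - m) := csSup_le hne (hub x h)
    have hxm : 0 < x - m := by linarith
    rw [le_div_iff₀ hxm] at hge
    nlinarith

theorem jensen_strict_chord
    (L : ℝ) (hL : 0 < L) (G : ℝ → ℝ)
    (hGanti : StrictAntiOn G (Set.Ioi 0))
    (hGconv : ConvexOn ℝ (Set.Ioi 0) G)
    (σ : ℝ → EuclideanSpace ℝ (Fin 3))
    (hmeas : Measurable σ)
    (hper : ∀ s : ℝ, σ (s + L) = σ s)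
    (u : ℝ) (hu : u ∈ Set.Ioo 0 L)
    (hint : IntervalIntegrable (fun s : ℝ => ‖σ (s + u) - σ s‖) volume 0 L)
    (hintG : IntervalIntegrable (fun s : ℝ => G ‖σ (s + u) - σ s‖) volume 0 L)
    (hpos : ∀ᵐ s ∂(volume.restrict (Set.Icc (0 : ℝ) L)), 0 < ‖σ (s + u) - σ s‖)
    (hlt : (∫ s in (0 : ℝ)..L, ‖σ (s + u) - σ s‖) < L ^ 2 / π * Real.sin (π * u / L)) :
    (1 / L) * (∫ s in (0 : ℝ)..L, G ‖σ (s + u) - σ s‖)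
      > G (L / π * Real.sin (π * u / L)) := by
  set f : ℝ → ℝ := fun s => ‖σ (s + u) - σ s‖ with hf
  set I : ℝ := ∫ s in (0 : ℝ)..L, f s with hI
  set c : ℝ := L / π * Real.sin (π * u / L) with hc
  have hposIoc : ∀ᵐ s ∂(volume.restrict (Set.Ioc (0 : ℝ) L)), 0 < f s :=
    ae_mono (Measure.restrict_mono Set.Ioc_subset_Icc_self le_rfl) hpos
  have hfIoc : IntegrableOn f (Set.Ioc (0 : ℝ) L) volume := hint.1
  have hGfIoc : IntegrableOn (fun s => G (f s)) (Set.Ioc (0 : ℝ) L) volume := hintG.1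
  have hvolIoc : volume (Set.Ioc (0 : ℝ) L) = ENNReal.ofReal L := by
    simp [Real.volume_Ioc]
  -- I > 0
  have hIpos : 0 < I := by
    rw [hI, intervalIntegral.integral_of_le hL.le]
    refine (setIntegral_pos_iff_support_of_nonneg_ae
      (hposIoc.mono fun s hs => hs.le) hfIoc).2 ?_
    have hsub : ∀ᵐ s ∂(volume.restrict (Set.Ioc (0 : ℝ) L)),
        s ∈ Function.support f := hposIoc.mono fun s hs => ne_of_gt hs
    have h1 : volume ({s | s ∉ Function.support f} ∩ Set.Ioc (0 : ℝ) L) = 0 := by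
      have := ae_iff.mp hsub
      rwa [Measure.restrict_apply' measurableSet_Ioc] at this
    by_contra hcon
    push_neg at hcon
    have hcov : Set.Ioc (0 : ℝ) L ⊆
        (Function.support f ∩ Set.Ioc (0 : ℝ) L) ∪
        ({s | s ∉ Function.support f} ∩ Set.Ioc (0 : ℝ) L) := by
      intro s hs
      by_cases h : s ∈ Function.support f
      · exact Or.inl ⟨h, hs⟩
      · exact Or.inr ⟨h, hs⟩
    have := (measure_mono (μ := volume) hcov).trans (measure_union_le _ _)
    rw [le_antisymm hcon zero_le, h1, add_zero, hvolIoc] at this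
    simp only [nonpos_iff_eq_zero, ENNReal.ofReal_eq_zero] at this
    linarith
  set m : ℝ := I / L with hm
  have hmpos : 0 < m := div_pos hIpos hL
  have hcpos : 0 < c := by
    apply mul_pos (div_pos hL Real.pi_pos)
    apply Real.sin_pos_of_pos_of_lt_pi
    · exact div_pos (mul_pos Real.pi_pos hu.1) hL
    · rw [div_lt_iff₀ hL]
      have := hu.2
      nlinarith [Real.pi_pos]
  have hmc : m < c := by
    rw [hm, div_lt_iff₀ hL]
    calc I < L ^ 2 / π * Real.sin (π * u / L) := hlt
      _ = c * L := by rw [hc]; ring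
  -- Jensen via supporting line
  obtain ⟨a, ha⟩ := convexOn_exists_support_line hGconv hmpos
  have hkey : L * G m ≤ ∫ s in Set.Ioc (0 : ℝ) L, G (f s) := by
    have hle : ∀ᵐ s ∂(volume.restrict (Set.Ioc (0 : ℝ) L)),
        G m + a * (f s - m) ≤ G (f s) := hposIoc.mono fun s hs => ha (f s) hs
    have hint2 : IntegrableOn (fun s => G m + a * (f s - m))
        (Set.Ioc (0 : ℝ) L) volume := by
      apply Integrable.add (integrable_const _)
      exact ((hfIoc.sub (integrable_const m)).const_mul a)
    have hmono := setIntegral_mono_ae_restrict (μ := volume) (s := Set.Ioc (0 : ℝ) L)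
      hint2 hGfIoc hle
    have hIeq : ∫ s in Set.Ioc (0 : ℝ) L, f s = I := by
      rw [hI, intervalIntegral.integral_of_le hL.le]
    have hcalc : ∫ s in Set.Ioc (0 : ℝ) L, (G m + a * (f s - m)) = L * G m := by
      have heq : (fun s => G m + a * (f s - m)) =
          fun s => a * f s + (G m - a * m) := by funext s; ring
      rw [heq, integral_add ((hfIoc.const_mul a)) (integrable_const _),
        MeasureTheory.integral_const_mul, hIeq, setIntegral_const, measureReal_def, hvolIoc]
      simp only [ENNReal.toReal_ofReal hL.le, smul_eq_mul]
      rw [hm]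
      field_simp
      ring
    rw [hcalc] at hmono
    exact hmono
  have hGm : G c < G m := hGanti (Set.mem_Ioi.mpr hmpos) (Set.mem_Ioi.mpr hcpos) hmc
  have hfinal : G m ≤ (1 / L) * ∫ s in (0 : ℝ)..L, G (f s) := by
    rw [intervalIntegral.integral_of_le hL.le, one_div, ← div_eq_inv_mul,
      le_div_iff₀ hL]
    linarith [hkey]
  exact lt_of_lt_of_le hGm hfinal
end
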